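/- The maximum value of the Lobachevsky function relates to its value at π/3 by Λ(π/6) = (3/2) Λ(π/3). -/

import Mathlib

open MeasureTheory Real

/-- The Lobachevsky function `Λ(θ) = -∫₀^θ log |2 sin t| dt`. -/
noncomputable def lobachevsky (θ : ℝ) : ℝ :=
  -∫ t in (0:ℝ)..θ, Real.log |2 * Real.sin t|

namespace LobAux

/-- The integrand of the Lobachevsky function. -/
noncomputable def f (t : ℝ) : ℝ := Real.log |2 * Real.sin t|

lemma f_pi_sub (t : ℝ) : f (Real.pi - t) = f t := by
  simp [f, Real.sin_pi_sub]

lemma f_meas : Measurable f :=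
  Real.measurable_log.comp ((continuous_const.mul Real.continuous_sin).measurable.abs)

lemma log_II : IntervalIntegrable Real.log volume 0 1 := by
  rw [intervalIntegrable_iff_integrableOn_Ioc_of_le zero_le_one]
  have h : IntegrableOn (fun x : ℝ => -Real.log x) (Set.Ioc (0:ℝ) 1) volume := by
    apply intervalIntegral.integrableOn_deriv_of_nonneg (g := fun x : ℝ => x - x * Real.log x)
    · exact (continuous_id.sub Real.continuous_mul_log).continuousOn
    · intro x hx
      have h1 := Real.hasDerivAt_mul_log (ne_of_gt hx.1)
      have h2 := (hasDerivAt_id x).sub h1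
      rw [show -Real.log x = 1 - (Real.log x + 1) by ring]
      exact h2
    · intro x hx
      have : Real.log x ≤ 0 := Real.log_nonpos hx.1.le hx.2.le
      linarith
  have h2 := h.neg
  rw [show (-fun x : ℝ => -Real.log x) = Real.log by funext x; simp] at h2
  exact h2

lemma h01 : IntervalIntegrable f volume 0 1 := by
  rw [intervalIntegrable_iff_integrableOn_Ioc_of_le zero_le_one]
  have hlog : IntegrableOn Real.log (Set.Ioc (0:ℝ) 1) volume :=
    (intervalIntegrable_iff_integrableOn_Ioc_of_le zero_le_one).mp log_II
  have hg : IntegrableOn (fun t : ℝ => Real.log 2 - Real.log t) (Set.Ioc (0:ℝ) 1) volume :=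
    (integrableOn_const (by simp)).sub hlog
  apply Integrable.mono hg f_meas.aestronglyMeasurable
  rw [ae_restrict_iff' measurableSet_Ioc]
  refine Filter.Eventually.of_forall fun t ht => ?_
  have ht0 : 0 < t := ht.1
  have ht1 : t ≤ 1 := ht.2
  have hpi : t < Real.pi / 2 := by nlinarith [Real.pi_gt_three]
  have hs : 0 < Real.sin t := Real.sin_pos_of_pos_of_lt_pi ht0 (by nlinarith [Real.pi_gt_three])
  have hub : 2 * Real.sin t ≤ 2 * t := by nlinarith [Real.sin_lt ht0]
  have hlb : t ≤ 2 * Real.sin t := by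
    have h5 := Real.mul_lt_sin ht0 hpi
    have hπ4 : Real.pi < 4 := by nlinarith [Real.pi_lt_d2]
    have hπ0 : 0 < Real.pi := Real.pi_pos
    have h6 : t ≤ 2 * (2 / Real.pi * t) := by
      rw [show 2 * (2 / Real.pi * t) = 4 * t / Real.pi by ring, le_div_iff₀ hπ0]
      nlinarith
    linarith
  have habs : |2 * Real.sin t| = 2 * Real.sin t := abs_of_pos (by linarith)
  have h1 : Real.log t ≤ f t := by
    rw [f, habs]
    exact Real.log_le_log ht0 hlb
  have h2 : f t ≤ Real.log 2 + Real.log t := by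
    rw [f, habs, ← Real.log_mul two_ne_zero (ne_of_gt ht0)]
    exact Real.log_le_log (by linarith) hub
  have hlt : Real.log t ≤ 0 := Real.log_nonpos ht0.le ht1
  have hl2 : (0:ℝ) ≤ Real.log 2 := Real.log_nonneg one_le_two
  rw [Real.norm_eq_abs, Real.norm_eq_abs,
    abs_of_nonneg (show (0:ℝ) ≤ Real.log 2 - Real.log t by linarith), abs_le]
  constructor <;> linarith

lemma hmid : IntervalIntegrable f volume 1 (Real.pi - 1) := by
  apply ContinuousOn.intervalIntegrable
  apply ContinuousOn.log ((continuous_const.mul Real.continuous_sin).abs.continuousOn)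
  intro x hx
  rw [Set.uIcc_of_le (by nlinarith [Real.pi_gt_three])] at hx
  have : 0 < Real.sin x :=
    Real.sin_pos_of_pos_of_lt_pi (by linarith [hx.1]) (by linarith [hx.2])
  simp only [abs_ne_zero]
  exact mul_ne_zero two_ne_zero this.ne'

lemma hlast : IntervalIntegrable f volume (Real.pi - 1) Real.pi := by
  have h := (h01.comp_sub_left Real.pi).symm
  simp only [f_pi_sub, sub_zero] at h
  exact h

lemma hI : IntervalIntegrable f volume 0 Real.pi :=
  (h01.trans hmid).trans hlast

lemma ii {a b : ℝ} (ha : a ∈ Set.Icc 0 Real.pi) (hb : b ∈ Set.Icc 0 Real.pi) :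
    IntervalIntegrable f volume a b := by
  apply hI.mono_set
  apply Set.uIcc_subset_uIcc <;> rw [Set.uIcc_of_le Real.pi_pos.le] <;> assumption

/-- `I x = ∫₀ˣ f`. -/
noncomputable def I (x : ℝ) : ℝ := ∫ t in (0:ℝ)..x, f t

lemma refl {x : ℝ} (hx : x ∈ Set.Icc 0 Real.pi) : I Real.pi = I x + I (Real.pi - x) := by
  have hx' : Real.pi - x ∈ Set.Icc 0 Real.pi := by
    constructor <;> [linarith [hx.2]; linarith [hx.1]]
  have h1 : I x + (∫ t in x..Real.pi, f t) = I Real.pi :=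
    intervalIntegral.integral_add_adjacent_intervals
      (ii (Set.left_mem_Icc.mpr Real.pi_pos.le) hx) (ii hx (Set.right_mem_Icc.mpr Real.pi_pos.le))
  have h2 : I (Real.pi - x) = ∫ t in x..Real.pi, f t := by
    have h3 : (∫ t in (0:ℝ)..(Real.pi - x), f (Real.pi - t)) = I (Real.pi - x) :=
      intervalIntegral.integral_congr fun t _ => f_pi_sub t
    rw [← h3, intervalIntegral.integral_comp_sub_left f Real.pi]
    norm_num
  linarith

lemma key_ae : ∀ᵐ s : ℝ, f (2 * s) = f s + f (s + Real.pi / 2) := by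
  have key : ∀ s : ℝ, Real.sin (2 * s) ≠ 0 → f (2 * s) = f s + f (s + Real.pi / 2) := by
    intro s hs
    have h2 : Real.sin (2 * s) = 2 * Real.sin s * Real.cos s := Real.sin_two_mul s
    have hsin : Real.sin s ≠ 0 := fun h => hs (by rw [h2, h]; ring)
    have hcos : Real.cos s ≠ 0 := fun h => hs (by rw [h2, h]; ring)
    simp only [f, Real.sin_add_pi_div_two]
    rw [show (2:ℝ) * Real.sin (2 * s) = (2 * Real.sin s) * (2 * Real.cos s) by rw [h2]; ring,
      abs_mul, Real.log_mul (abs_ne_zero.mpr (by simpa using hsin))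
        (abs_ne_zero.mpr (by simpa using hcos))]
  have hN : volume {s : ℝ | Real.sin (2 * s) = 0} = 0 := by
    have hsub : {s : ℝ | Real.sin (2 * s) = 0} ⊆ ⋃ n : ℤ, {((n : ℝ) * Real.pi / 2)} := by
      intro s hs
      obtain ⟨n, hn⟩ := Real.sin_eq_zero_iff.mp hs
      exact Set.mem_iUnion.mpr ⟨n, by simp only [Set.mem_singleton_iff]; linarith⟩
    exact measure_mono_null hsub (measure_iUnion_null fun n => measure_singleton _)
  have := measure_eq_zero_iff_ae_notMem.mp hN
  filter_upwards [this] with s hs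
  exact key s hs

lemma dup {θ : ℝ} (hθ : θ ∈ Set.Icc 0 (Real.pi / 2)) :
    I (2 * θ) = 2 * I θ + 2 * (I (θ + Real.pi / 2) - I (Real.pi / 2)) := by
  have hπ := Real.pi_pos
  have hθ1 : θ ∈ Set.Icc 0 Real.pi := ⟨hθ.1, by linarith [hθ.2]⟩
  have hθ2 : 2 * θ ∈ Set.Icc 0 Real.pi := ⟨by linarith [hθ.1], by linarith [hθ.2]⟩
  have hhalf : Real.pi / 2 ∈ Set.Icc 0 Real.pi := ⟨by linarith, by linarith⟩
  have hθh : θ + Real.pi / 2 ∈ Set.Icc 0 Real.pi := ⟨by linarith [hθ.1], by linarith [hθ.2]⟩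
  -- step 1 : substitution t = 2 s
  have s1 : (∫ s in (0:ℝ)..θ, f (2 * s)) = (2:ℝ)⁻¹ * I (2 * θ) := by
    rw [intervalIntegral.integral_comp_mul_left f two_ne_zero]
    simp [I]
  -- step 2 : a.e. pointwise splitting
  have s2 : (∫ s in (0:ℝ)..θ, f (2 * s)) =
      ∫ s in (0:ℝ)..θ, (f s + f (s + Real.pi / 2)) := by
    apply intervalIntegral.integral_congr_ae
    filter_upwards [key_ae] with s hs _
    exact hs
  -- integrability of the shifted function
  have hshift : IntervalIntegrable (fun s => f (s + Real.pi / 2)) volume 0 θ := by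
    have h := (ii hhalf hθh).comp_add_right (Real.pi / 2)
    norm_num at h
    convert h using 2
  have s3 : (∫ s in (0:ℝ)..θ, (f s + f (s + Real.pi / 2))) =
      (∫ s in (0:ℝ)..θ, f s) + ∫ s in (0:ℝ)..θ, f (s + Real.pi / 2) :=
    intervalIntegral.integral_add (ii (Set.left_mem_Icc.mpr hπ.le) hθ1) hshift
  have s4 : (∫ s in (0:ℝ)..θ, f (s + Real.pi / 2)) =
      ∫ t in (Real.pi / 2)..(θ + Real.pi / 2), f t := by
    rw [intervalIntegral.integral_comp_add_right f (Real.pi / 2)]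
    norm_num
  have s5 : I (Real.pi / 2) + (∫ t in (Real.pi / 2)..(θ + Real.pi / 2), f t)
      = I (θ + Real.pi / 2) :=
    intervalIntegral.integral_add_adjacent_intervals
      (ii (Set.left_mem_Icc.mpr hπ.le) hhalf) (ii hhalf hθh)
  have : (2:ℝ)⁻¹ * I (2 * θ) = I θ + (I (θ + Real.pi / 2) - I (Real.pi / 2)) := by
    have e1 : I θ = ∫ s in (0:ℝ)..θ, f s := rfl
    rw [← s1, s2, s3, s4]
    linarith [s5, e1]
  linarith

end LobAux

/-- Λ(π/6) = (3/2) Λ(π/3). -/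
theorem lobachevsky_pi_div_six :
    lobachevsky (Real.pi / 6) = (3 / 2) * lobachevsky (Real.pi / 3) := by
  have hπ := Real.pi_pos
  have hL : ∀ x : ℝ, lobachevsky x = -LobAux.I x := fun x => rfl
  -- duplication at π/2, π/4, π/6
  have d2 := LobAux.dup (θ := Real.pi / 2) ⟨by linarith, le_refl _⟩
  have d4 := LobAux.dup (θ := Real.pi / 4) ⟨by linarith, by linarith⟩
  have d6 := LobAux.dup (θ := Real.pi / 6) ⟨by linarith, by linarith⟩
  -- reflections
  have r4 := LobAux.refl (x := Real.pi / 4) ⟨by linarith, by linarith⟩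
  have r3 := LobAux.refl (x := Real.pi / 3) ⟨by linarith, by linarith⟩
  rw [show (2:ℝ) * (Real.pi / 2) = Real.pi by ring,
    show Real.pi / 2 + Real.pi / 2 = Real.pi by ring] at d2
  rw [show (2:ℝ) * (Real.pi / 4) = Real.pi / 2 by ring,
    show Real.pi / 4 + Real.pi / 2 = Real.pi - Real.pi / 4 by ring] at d4
  rw [show (2:ℝ) * (Real.pi / 6) = Real.pi / 3 by ring,
    show Real.pi / 6 + Real.pi / 2 = Real.pi - Real.pi / 3 by ring] at d6
  rw [hL, hL]
  linarith
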